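/- Let H_0 be a complex Hilbert space, m, r ≥ 0 integers with m + r ≥ 1, τ_1, …, τ_{m+r} ∈ (0,1), and Q_1, …, Q_m orthogonal projections on H_0. Define the operator B on the direct sum of (2m + r + 1) copies of H_0 by the block matrix whose first row and column have blocks τ_k I coupling the first coordinate to each of the pairs (x_k, y_k) (both with coefficient τ_k, 1 ≤ k ≤ m) and to each v_k (with coefficient τ_{m+k}, 1 ≤ k ≤ r), with identity diagonal blocks, off-diagonal blocks Q_k between the coordinates x_k and y_k (in both directions), and all other blocks zero. Then B is nonnegative if and only if Σ_{k=1}^m τ_k² R_k ≤ ξ(τ)·I, where R_k = I − Q_k and ξ(τ) = 1 − Σ_{k=1}^{m+r} τ_k². -/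

import Mathlib

noncomputable section
variable {H : Type*} [NormedAddCommGroup H] [InnerProductSpace ℂ H]

def ri (x y : H) : ℝ := (inner ℂ x y : ℂ).re

lemma ri_def (x y : H) : (inner ℂ x y : ℂ).re = ri x y := rfl
lemma ri_add_left (x y z : H) : ri (x + y) z = ri x z + ri y z := by
  simp [ri, inner_add_left]
lemma ri_add_right (x y z : H) : ri x (y + z) = ri x y + ri x z := by
  simp [ri, inner_add_right]
lemma ri_sub_left (x y z : H) : ri (x - y) z = ri x z - ri y z := by
  simp [ri, inner_sub_left]
lemma ri_sub_right (x y z : H) : ri x (y - z) = ri x y - ri x z := by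
  simp [ri, inner_sub_right]
lemma ri_neg_left (x y : H) : ri (-x) y = -ri x y := by
  simp [ri, inner_neg_left]
lemma ri_smul_left (t : ℝ) (x y : H) : ri (t • x) y = t * ri x y := by
  rw [show t • x = (t : ℂ) • x from (Complex.coe_smul t x).symm]
  rw [ri, inner_smul_left, Complex.conj_ofReal, Complex.re_ofReal_mul]; rfl
lemma ri_smul_right (t : ℝ) (x y : H) : ri x (t • y) = t * ri x y := by
  rw [show t • y = (t : ℂ) • y from (Complex.coe_smul t y).symm]
  rw [ri, inner_smul_right, Complex.re_ofReal_mul]; rfl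
lemma ri_csmul_left (t : ℝ) (x y : H) : ri ((t : ℂ) • x) y = t * ri x y := by
  rw [Complex.coe_smul, ri_smul_left]
lemma ri_comm (x y : H) : ri x y = ri y x := inner_re_symm (𝕜 := ℂ) y x |>.symm
lemma ri_self (x : H) : ri x x = ‖x‖ ^ 2 := inner_self_eq_norm_sq (𝕜 := ℂ) x
lemma ri_sum_left {ι : Type*} (s : Finset ι) (f : ι → H) (y : H) :
    ri (∑ i ∈ s, f i) y = ∑ i ∈ s, ri (f i) y := by
  simp [ri, sum_inner]
lemma ri_norm_add (x y : H) : ‖x + y‖ ^ 2 = ‖x‖ ^ 2 + 2 * ri x y + ‖y‖ ^ 2 :=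
  norm_add_sq (𝕜 := ℂ) x y
lemma ri_le (x y : H) : ri x y ≤ ‖x‖ * ‖y‖ := re_inner_le_norm (𝕜 := ℂ) x y

section Proj
variable (P : H →L[ℂ] H) (hP : ∀ a b : H, ri (P a) b = ri a (P b))
  (hP2 : ∀ a : H, P (P a) = P a)

include hP in
lemma pg (a b : H) : ri a (P b) = ri (P a) b := (hP a b).symm

include hP hP2 in
lemma pgg (a b : H) : ri (P a) (P b) = ri (P a) b := by
  rw [hP a (P b), hP2, ← hP a b]

include hP in
lemma pswap (a b : H) : ri (P a) b = ri (P b) a := by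
  rw [ri_comm, pg P hP]

include hP hP2 in
lemma riR_self (w : H) : ri (w - P w) w = ‖w - P w‖ ^ 2 := by
  rw [← ri_self]
  simp only [map_add, map_sub, ri_sub_left, ri_sub_right, pg P hP, pgg P hP hP2, hP2]
  ring

include hP hP2 in
lemma key1 (t : ℝ) (x y w : H) :
    ‖x‖ ^ 2 + ‖y‖ ^ 2 + 2 * ri (P x) y
      = ‖P (x + y) - t • P w‖ ^ 2 + ‖(x - P x) - t • (w - P w)‖ ^ 2
        + ‖(y - P y) - t • (w - P w)‖ ^ 2
        + 2 * t * ri (x + y) w - t ^ 2 * (‖w‖ ^ 2 + ri (w - P w) w) := by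
  simp only [← ri_self, map_add, map_sub, ContinuousLinearMap.map_smul_of_tower, ri_add_left, ri_add_right,
    ri_sub_left, ri_sub_right, ri_smul_left, ri_smul_right, pg P hP, pgg P hP hP2, hP2,
    pswap P hP y x, pswap P hP w x, pswap P hP w y, ri_comm y x, ri_comm w x, ri_comm w y]
  ring

include hP hP2 in
lemma key3 (t : ℝ) (w : H) :
    ‖(t / 2) • (w + (w - P w))‖ ^ 2 + ‖(t / 2) • (w + (w - P w))‖ ^ 2
        + 2 * ri (P ((t / 2) • (w + (w - P w)))) ((t / 2) • (w + (w - P w)))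
      = t ^ 2 * (‖w‖ ^ 2 + ri (w - P w) w) := by
  simp only [← ri_self, ContinuousLinearMap.map_smul_of_tower, map_add, map_sub, ri_add_left, ri_add_right,
    ri_sub_left, ri_sub_right, ri_smul_left, ri_smul_right, pg P hP, pgg P hP hP2, hP2]
  ring

end Proj
end

set_option maxHeartbeats 1000000 in
/-- The block operator B(Q₁,…,Q_m) is nonnegative (its quadratic form is ≥ 0) iff
Σ τ_k² R_k ≤ ξ(τ) I, where R_k = I − Q_k and ξ(τ) = 1 − Σ τ_k². -/
theorem stmt8 {H₀ : Type*} [NormedAddCommGroup H₀] [InnerProductSpace ℂ H₀] [CompleteSpace H₀]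
    (m r : ℕ) (hmr : 1 ≤ m + r)
    (τ₁ : Fin m → ℝ) (τ₂ : Fin r → ℝ)
    (hτ₁ : ∀ k, τ₁ k ∈ Set.Ioo (0 : ℝ) 1) (hτ₂ : ∀ k, τ₂ k ∈ Set.Ioo (0 : ℝ) 1)
    (Q : Fin m → H₀ →L[ℂ] H₀)
    (hsa : ∀ k, IsSelfAdjoint (Q k)) (hid : ∀ k, Q k ∘L Q k = Q k) :
    (∀ (z : H₀) (x y : Fin m → H₀) (v : Fin r → H₀),
        0 ≤ ‖z‖ ^ 2
          + 2 * ((inner ℂ z (∑ k, (τ₁ k : ℂ) • (x k + y k) + ∑ k, (τ₂ k : ℂ) • v k) : ℂ)).re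
          + ∑ k, (‖x k‖ ^ 2 + ‖y k‖ ^ 2 + 2 * ((inner ℂ ((Q k) (x k)) (y k) : ℂ)).re)
          + ∑ k, ‖v k‖ ^ 2) ↔
    (∀ w : H₀,
        ∑ k, (τ₁ k) ^ 2 * ((inner ℂ ((ContinuousLinearMap.id ℂ H₀ - Q k) w) w : ℂ)).re
          ≤ (1 - (∑ k, (τ₁ k) ^ 2 + ∑ k, (τ₂ k) ^ 2)) * ‖w‖ ^ 2) := by
  have hQQ : ∀ k (u : H₀), Q k (Q k u) = Q k u := fun k u => by
    have := DFunLike.congr_fun (hid k) u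
    simpa using this
  have hPsw : ∀ k (a b : H₀), ri (Q k a) b = ri a (Q k b) := by
    intro k a b
    have hadj : ContinuousLinearMap.adjoint (Q k) = Q k :=
      ContinuousLinearMap.isSelfAdjoint_iff'.mp (hsa k)
    unfold ri
    conv_lhs => rw [← hadj]
    rw [ContinuousLinearMap.adjoint_inner_left]
  have hS1nn : (0:ℝ) ≤ ∑ k, (τ₁ k)^2 := Finset.sum_nonneg fun k _ => sq_nonneg _
  have hS2nn : (0:ℝ) ≤ ∑ k, (τ₂ k)^2 := Finset.sum_nonneg fun k _ => sq_nonneg _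
  have hS : (0:ℝ) < ∑ k, (τ₁ k)^2 + ∑ k, (τ₂ k)^2 := by
    rcases Nat.eq_zero_or_pos m with hm | hm
    · have hr : 0 < r := by omega
      have : (0:ℝ) < ∑ k, (τ₂ k)^2 :=
        Finset.sum_pos' (fun k _ => sq_nonneg _)
          ⟨⟨0, hr⟩, Finset.mem_univ _, by have := (hτ₂ ⟨0, hr⟩).1; positivity⟩
      linarith
    · have : (0:ℝ) < ∑ k, (τ₁ k)^2 :=
        Finset.sum_pos' (fun k _ => sq_nonneg _)
          ⟨⟨0, hm⟩, Finset.mem_univ _, by have := (hτ₁ ⟨0, hm⟩).1; positivity⟩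
      linarith
  constructor
  · -- forward direction
    intro h w
    simp only [ContinuousLinearMap.sub_apply, ContinuousLinearMap.id_apply, ri_def]
    have hP := h (-((∑ k, (τ₁ k)^2 + ∑ k, (τ₂ k)^2) • w + ∑ k, ((τ₁ k)^2) • (w - Q k w)))
      (fun k => (τ₁ k / 2) • (w + (w - Q k w)))
      (fun k => (τ₁ k / 2) • (w + (w - Q k w)))
      (fun k => τ₂ k • w)
    beta_reduce at hP
    have hz0 : (∑ k, (τ₁ k : ℂ) • ((τ₁ k / 2) • (w + (w - Q k w)) + (τ₁ k / 2) • (w + (w - Q k w)))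
        + ∑ k, (τ₂ k : ℂ) • (τ₂ k • w))
        = (∑ k, (τ₁ k)^2 + ∑ k, (τ₂ k)^2) • w + ∑ k, ((τ₁ k)^2) • (w - Q k w) := by
      have e1 : ∀ k : Fin m, (τ₁ k : ℂ) • ((τ₁ k / 2) • (w + (w - Q k w))
          + (τ₁ k / 2) • (w + (w - Q k w)))
          = ((τ₁ k)^2) • w + ((τ₁ k)^2) • (w - Q k w) := by
        intro k
        rw [← add_smul, add_halves, Complex.coe_smul, smul_smul, ← sq, smul_add]
      have e2 : ∀ k : Fin r, (τ₂ k : ℂ) • (τ₂ k • w) = ((τ₂ k)^2) • w := by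
        intro k
        rw [Complex.coe_smul, smul_smul, ← sq]
      simp only [e1, e2]
      rw [Finset.sum_add_distrib, ← Finset.sum_smul, ← Finset.sum_smul, add_smul]
      abel
    rw [hz0] at hP
    simp only [ri_def, norm_neg, ri_neg_left, ri_self] at hP
    have hterm : ∑ k, (‖(τ₁ k / 2) • (w + (w - Q k w))‖^2 + ‖(τ₁ k / 2) • (w + (w - Q k w))‖^2
        + 2 * ri (Q k ((τ₁ k / 2) • (w + (w - Q k w)))) ((τ₁ k / 2) • (w + (w - Q k w))))
        = (∑ k, (τ₁ k)^2) * ‖w‖^2 + ∑ k, (τ₁ k)^2 * ri (w - Q k w) w := by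
      rw [Finset.sum_congr rfl (fun k _ => key3 (Q k) (hPsw k) (hQQ k) (τ₁ k) w)]
      simp only [mul_add]
      rw [Finset.sum_add_distrib, ← Finset.sum_mul]
    have hv : ∑ k, ‖τ₂ k • w‖^2 = (∑ k, (τ₂ k)^2) * ‖w‖^2 := by
      have e : ∀ k : Fin r, ‖τ₂ k • w‖^2 = (τ₂ k)^2 * ‖w‖^2 := by
        intro k
        rw [norm_smul, mul_pow, Real.norm_eq_abs, sq_abs]
      rw [Finset.sum_congr rfl (fun k _ => e k), ← Finset.sum_mul]
    rw [hterm, hv] at hP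
    -- abbreviations
    have hρw : ri (∑ k, ((τ₁ k)^2) • (w - Q k w)) w = ∑ k, (τ₁ k)^2 * ri (w - Q k w) w := by
      rw [ri_sum_left]
      exact Finset.sum_congr rfl fun k _ => ri_smul_left _ _ _
    have hexp : ‖(∑ k, (τ₁ k)^2 + ∑ k, (τ₂ k)^2) • w + ∑ k, ((τ₁ k)^2) • (w - Q k w)‖^2
        = (∑ k, (τ₁ k)^2 + ∑ k, (τ₂ k)^2)^2 * ‖w‖^2
          + 2 * ((∑ k, (τ₁ k)^2 + ∑ k, (τ₂ k)^2) * (∑ k, (τ₁ k)^2 * ri (w - Q k w) w))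
          + ‖∑ k, ((τ₁ k)^2) • (w - Q k w)‖^2 := by
      rw [ri_norm_add, ri_smul_left, ri_comm w _, hρw]
      have : ‖(∑ k, (τ₁ k)^2 + ∑ k, (τ₂ k)^2) • w‖^2
          = (∑ k, (τ₁ k)^2 + ∑ k, (τ₂ k)^2)^2 * ‖w‖^2 := by
        rw [norm_smul, mul_pow, Real.norm_eq_abs, sq_abs]
      rw [this]
    have hCS : (∑ k, (τ₁ k)^2 * ri (w - Q k w) w)
        ≤ ‖∑ k, ((τ₁ k)^2) • (w - Q k w)‖ * ‖w‖ := hρw ▸ ri_le _ w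
    have ha0 : (0:ℝ) ≤ ∑ k, (τ₁ k)^2 * ri (w - Q k w) w := by
      refine Finset.sum_nonneg fun k _ => mul_nonneg (sq_nonneg _) ?_
      rw [riR_self (Q k) (hPsw k) (hQQ k)]
      positivity
    have hn0 : (0:ℝ) ≤ ‖w‖^2 := by positivity
    -- derive the quadratic inequality
    set S := ∑ k, (τ₁ k)^2 + ∑ k, (τ₂ k)^2 with hSdef
    set a := ∑ k, (τ₁ k)^2 * ri (w - Q k w) w with hadef
    set q := ‖∑ k, ((τ₁ k)^2) • (w - Q k w)‖ with hqdef
    set n := ‖w‖^2 with hndef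
    -- hP : 0 ≤ ‖Sw+ρ‖² - 2‖Sw+ρ‖² + (S1 n + a) + S2 n ; with hexp:
    have hq : q^2 ≤ S*n + a - S^2*n - 2*(S*a) := by nlinarith [hP, hexp]
    have hX : a^2 ≤ q^2 * n := by nlinarith [hCS, ha0, norm_nonneg (∑ k, ((τ₁ k)^2) • (w - Q k w)), norm_nonneg w]
    have hXX : a^2 ≤ (S*n + a - S^2*n - 2*(S*a))*n :=
      le_trans hX (mul_le_mul_of_nonneg_right hq hn0)
    rcases eq_or_lt_of_le hn0 with hn | hn
    · nlinarith [hXX, ha0]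
    · have haSn : 0 < a + S * n := by nlinarith [ha0, mul_pos hS hn]
      nlinarith [hXX, haSn]
  · -- backward direction
    intro h z x y v
    set w := ∑ k, (τ₁ k : ℂ) • (x k + y k) + ∑ k, (τ₂ k : ℂ) • v k with hwdef
    simp only [ri_def]
    specialize h w
    simp only [ContinuousLinearMap.sub_apply, ContinuousLinearMap.id_apply, ri_def] at h
    have hsum1 : ∑ k, (‖x k‖^2 + ‖y k‖^2 + 2 * ri (Q k (x k)) (y k))
        = (∑ k, (‖Q k (x k + y k) - τ₁ k • Q k w‖^2
            + ‖(x k - Q k (x k)) - τ₁ k • (w - Q k w)‖^2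
            + ‖(y k - Q k (y k)) - τ₁ k • (w - Q k w)‖^2))
          + 2 * (∑ k, τ₁ k * ri (x k + y k) w)
          - ((∑ k, (τ₁ k)^2) * ‖w‖^2 + ∑ k, (τ₁ k)^2 * ri (w - Q k w) w) := by
      rw [Finset.sum_congr rfl (fun k _ => key1 (Q k) (hPsw k) (hQQ k) (τ₁ k) (x k) (y k) w)]
      simp only [mul_add, mul_assoc, Finset.sum_add_distrib, Finset.sum_sub_distrib]
      rw [← Finset.mul_sum, ← Finset.sum_mul]
    have hsum2 : ∑ k, ‖v k‖^2
        = (∑ k, ‖v k - τ₂ k • w‖^2) + 2 * (∑ k, τ₂ k * ri (v k) w)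
          - (∑ k, (τ₂ k)^2) * ‖w‖^2 := by
      have e : ∀ k : Fin r, ‖v k‖^2
          = ‖v k - τ₂ k • w‖^2 + 2 * (τ₂ k * ri (v k) w) - (τ₂ k)^2 * ‖w‖^2 := by
        intro k
        simp only [← ri_self, ri_sub_left, ri_sub_right, ri_smul_left, ri_smul_right,
          ri_comm w (v k)]
        ring
      rw [Finset.sum_congr rfl (fun k _ => e k), Finset.sum_sub_distrib, Finset.sum_add_distrib,
        ← Finset.sum_mul, ← Finset.mul_sum]
    have hww : ri w w = ∑ k, τ₁ k * ri (x k + y k) w + ∑ k, τ₂ k * ri (v k) w := by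
      conv_lhs => rw [hwdef]
      rw [ri_add_left, ri_sum_left, ri_sum_left]
      simp only [ri_csmul_left]
      rfl
    have hnw : ‖z + w‖^2 = ‖z‖^2 + 2 * ri z w + ‖w‖^2 := ri_norm_add z w
    have hrw : ri w w = ‖w‖^2 := ri_self w
    have pos1 : (0:ℝ) ≤ ∑ k, (‖Q k (x k + y k) - τ₁ k • Q k w‖^2
        + ‖(x k - Q k (x k)) - τ₁ k • (w - Q k w)‖^2
        + ‖(y k - Q k (y k)) - τ₁ k • (w - Q k w)‖^2) :=
      Finset.sum_nonneg fun k _ => by positivity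
    have pos2 : (0:ℝ) ≤ ∑ k, ‖v k - τ₂ k • w‖^2 := Finset.sum_nonneg fun k _ => by positivity
    have pos3 : (0:ℝ) ≤ ‖z + w‖^2 := by positivity
    nlinarith [h, hsum1, hsum2, hww, hnw, hrw, pos1, pos2, pos3]
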